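/- Let A be a p×p upper triangular matrix and B a q×q upper triangular matrix over ℂ. Then the linear map R ↦ A·R − R·B from p×q complex matrices to p×q complex matrices is bijective if and only if A_{ii} ≠ B_{jj} for all 1 ≤ i ≤ p and 1 ≤ j ≤ q, i.e. if and only if A and B have no common eigenvalue. -/
import Mathlib

open Matrix Finset

/-- For upper triangular complex matrices `A` (p×p) and `B` (q×q), the Sylvester
operator `R ↦ A·R − R·B` is bijective iff `A i i ≠ B j j` for all `i`, `j`,
i.e. iff `A` and `B` have no common eigenvalue. -/
theorem sylvester_bijective_iff_no_common_eigenvalue {p q : ℕ}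
    (A : Matrix (Fin p) (Fin p) ℂ) (B : Matrix (Fin q) (Fin q) ℂ)
    (hA : A.BlockTriangular id) (hB : B.BlockTriangular id) :
    Function.Bijective (fun R : Matrix (Fin p) (Fin q) ℂ => A * R - R * B) ↔
      ∀ (i : Fin p) (j : Fin q), A i i ≠ B j j := by
  set f : Matrix (Fin p) (Fin q) ℂ →ₗ[ℂ] Matrix (Fin p) (Fin q) ℂ :=
    { toFun := fun R => A * R - R * B
      map_add' := fun R S => by simp [Matrix.mul_add, Matrix.add_mul]; abel
      map_smul' := fun c R => by simp [Matrix.mul_smul, Matrix.smul_mul, smul_sub] } with hf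
  constructor
  · intro hbij
    by_contra h
    push_neg at h
    obtain ⟨i, j, hij⟩ := h
    have hdetA : (A - A i i • 1).det = 0 := by
      have ht : (A - A i i • 1).BlockTriangular id := by
        intro a b hab
        have h1 : (1 : Matrix (Fin p) (Fin p) ℂ) a b = 0 :=
          Matrix.one_apply_ne (ne_of_lt hab).symm
        simp [hA hab, h1]
      rw [Matrix.det_of_upperTriangular ht]
      exact Finset.prod_eq_zero (Finset.mem_univ i) (by simp)
    have hdetB : (B - A i i • 1).det = 0 := by
      have ht : (B - A i i • 1).BlockTriangular id := by
        intro a b hab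
        have h1 : (1 : Matrix (Fin q) (Fin q) ℂ) a b = 0 :=
          Matrix.one_apply_ne (ne_of_lt hab).symm
        simp [hB hab, h1]
      rw [Matrix.det_of_upperTriangular ht]
      exact Finset.prod_eq_zero (Finset.mem_univ j) (by simp [hij])
    obtain ⟨v, hv, hv0⟩ := (Matrix.exists_mulVec_eq_zero_iff).mpr hdetA
    obtain ⟨w, hw, hw0⟩ := (Matrix.exists_vecMul_eq_zero_iff).mpr hdetB
    have hAv : A *ᵥ v = A i i • v := by
      have := hv0
      rw [Matrix.sub_mulVec, sub_eq_zero] at this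
      rw [this, Matrix.smul_mulVec, Matrix.one_mulVec]
    have hwB : w ᵥ* B = A i i • w := by
      have := hw0
      rw [Matrix.vecMul_sub, sub_eq_zero] at this
      rw [this]
      ext b
      simp [Matrix.vecMul, dotProduct, Matrix.one_apply, mul_ite,
        Finset.sum_ite_eq, mul_comm]
    set R : Matrix (Fin p) (Fin q) ℂ := vecMulVec v w with hR
    have hfR : A * R - R * B = 0 := by
      ext a b
      have h1 : (A * R) a b = (A *ᵥ v) a * w b := by
        simp [hR, Matrix.mul_apply, Matrix.vecMulVec_apply, Matrix.mulVec,
          dotProduct, Finset.sum_mul, mul_assoc]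
      have h2 : (R * B) a b = v a * (w ᵥ* B) b := by
        simp [hR, Matrix.mul_apply, Matrix.vecMulVec_apply, Matrix.vecMul,
          dotProduct, Finset.mul_sum, mul_assoc]
      simp [h1, h2, hAv, hwB]
      ring
    have hR0 : R = 0 := by
      have := hbij.injective (a₁ := R) (a₂ := 0) (by simpa using hfR)
      simpa using this
    obtain ⟨a, ha⟩ := Function.ne_iff.mp hv
    obtain ⟨b, hb⟩ := Function.ne_iff.mp hw
    have : R a b = 0 := by rw [hR0]; simp
    rw [hR, Matrix.vecMulVec_apply] at this
    exact (mul_ne_zero ha hb) this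
  · intro hAB
    have hinj : Function.Injective f := by
      rw [← LinearMap.ker_eq_bot, LinearMap.ker_eq_bot']
      intro R hR0
      have hR : ∀ a b, (A * R) a b = (R * B) a b := by
        intro a b
        have : A * R - R * B = 0 := hR0
        have := congrFun (congrFun this a) b
        simpa [sub_eq_zero] using this
      have key : ∀ n : ℕ, ∀ (i : Fin p) (j : Fin q), p - i.val + j.val ≤ n → R i j = 0 := by
        intro n
        induction n using Nat.strong_induction_on with
        | _ n IH =>
          intro i j hn
          have hL : (A * R) i j = A i i * R i j := by
            rw [Matrix.mul_apply]
            apply Finset.sum_eq_single i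
            · intro k _ hk
              rcases lt_or_gt_of_ne hk with hlt | hgt
              · rw [hA (by simpa using hlt), zero_mul]
              · have : R k j = 0 := by
                  apply IH (p - k.val + j.val) (by
                    have hkp := k.isLt
                    have hip := i.isLt
                    omega) k j le_rfl
                rw [this, mul_zero]
            · intro h; exact absurd (Finset.mem_univ i) h
          have hRt : (R * B) i j = R i j * B j j := by
            rw [Matrix.mul_apply]
            apply Finset.sum_eq_single j
            · intro k _ hk
              rcases lt_or_gt_of_ne hk with hlt | hgt
              · have : R i k = 0 := by
                  apply IH (p - i.val + k.val) (by omega) i k le_rfl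
                rw [this, zero_mul]
              · rw [hB (by simpa using hgt), mul_zero]
            · intro h; exact absurd (Finset.mem_univ j) h
          have : (A i i - B j j) * R i j = 0 := by
            have := hR i j
            rw [hL, hRt] at this
            ring_nf
            linear_combination this
          rcases mul_eq_zero.mp this with h | h
          · exact absurd (sub_eq_zero.mp h) (hAB i j)
          · exact h
      ext a b
      exact key (p - a.val + b.val) a b le_rfl
    exact ⟨hinj, LinearMap.injective_iff_surjective.mp hinj⟩
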